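/- Let δ > 0, let m : ℕ → ℝ be a strictly increasing sequence of real numbers, and let a : ℕ → ℂ. Suppose that for every complex number z with 0 < |z| < δ, the family (a_i · z^{m_i})_{i∈ℕ} is absolutely summable and ∑_{i} a_i · z^{m_i} = 0. Then a_i = 0 for every i. -/

import Mathlib

open Filter Topology

set_option maxHeartbeats 1000000

private lemma key_vanish (δ : ℝ) (hδ : 0 < δ)
    (m : ℕ → ℝ) (hm : StrictMono m) (a : ℕ → ℂ)
    (h : ∀ z : ℂ, 0 < ‖z‖ → ‖z‖ < δ →
      Summable (fun i : ℕ => ‖a i * z ^ ((m i : ℝ) : ℂ)‖) ∧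
      ∑' i : ℕ, a i * z ^ ((m i : ℝ) : ℂ) = 0) : a 0 = 0 := by
  set x0 : ℝ := δ / 2 with hx0def
  have hx0 : 0 < x0 := by positivity
  have hx0δ : x0 < δ := by simp [hx0def]; linarith
  set p : ℝ := m 1 - m 0 with hpdef
  have hp : 0 < p := sub_pos.2 (hm one_pos)
  have hnorm : ∀ (x : ℝ), 0 < x → ∀ i,
      ‖a i * (x : ℂ) ^ ((m i : ℝ) : ℂ)‖ = ‖a i‖ * x ^ (m i) := by
    intro x hx i
    simp only [norm_mul, Complex.norm_cpow_eq_rpow_re_of_pos hx,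
      Complex.ofReal_re]
  have habs : ∀ (x : ℝ), 0 < x → ‖(x : ℂ)‖ = x := by
    intro x hx; rw [Complex.norm_real, Real.norm_eq_abs, abs_of_pos hx]
  -- summability at x0
  have hS0 := (h (x0 : ℂ) (by rw [habs x0 hx0]; exact hx0) (by rw [habs x0 hx0]; exact hx0δ)).1
  have hS0' : Summable (fun i => ‖a i‖ * x0 ^ (m i)) := by
    refine hS0.congr fun i => ?_
    exact hnorm x0 hx0 i
  set b : ℕ → ℝ := fun i => ‖a (i + 1)‖ * x0 ^ (m (i + 1) - m 0) with hbdef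
  have hb : Summable b := by
    have ht : Summable (fun i => ‖a (i + 1)‖ * x0 ^ (m (i + 1))) :=
      (summable_nat_add_iff 1).mpr hS0'
    have : Summable (fun i => (‖a (i + 1)‖ * x0 ^ (m (i + 1))) * (x0 ^ (m 0))⁻¹) :=
      ht.mul_right _
    refine this.congr fun i => ?_
    show _ = ‖a (i + 1)‖ * x0 ^ (m (i + 1) - m 0)
    rw [Real.rpow_sub hx0]
    ring
  set C : ℝ := ∑' i, b i with hCdef
  have hbnn : ∀ i, 0 ≤ b i := fun i => by positivity
  have hest : ∀ x : ℝ, 0 < x → x < x0 → ‖a 0‖ ≤ C * (x / x0) ^ p := by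
    intro x hx hxlt
    have hxδ : x < δ := hxlt.trans hx0δ
    obtain ⟨hS, hT⟩ := h (x : ℂ) (by rw [habs x hx]; exact hx) (by rw [habs x hx]; exact hxδ)
    have hf : Summable (fun i : ℕ => a i * (x : ℂ) ^ ((m i : ℝ) : ℂ)) :=
      Summable.of_norm hS
    have hsplit := Summable.sum_add_tsum_nat_add 1 hf
    rw [hT, Finset.range_one, Finset.sum_singleton] at hsplit
    have h0 : a 0 * (x : ℂ) ^ ((m 0 : ℝ) : ℂ)
        = - ∑' i, a (i + 1) * (x : ℂ) ^ ((m (i + 1) : ℝ) : ℂ) :=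
      eq_neg_of_add_eq_zero_left hsplit
    have hStail : Summable (fun i => ‖a (i + 1) * (x : ℂ) ^ ((m (i + 1) : ℝ) : ℂ)‖) :=
      (summable_nat_add_iff (f := fun i => ‖a i * (x : ℂ) ^ ((m i : ℝ) : ℂ)‖) 1).mpr hS
    have hbound1 : ‖a 0‖ * x ^ (m 0) ≤ ∑' i, ‖a (i + 1)‖ * x ^ (m (i + 1)) := by
      calc ‖a 0‖ * x ^ (m 0) = ‖a 0 * (x : ℂ) ^ ((m 0 : ℝ) : ℂ)‖ := (hnorm x hx 0).symm
        _ = ‖∑' i, a (i + 1) * (x : ℂ) ^ ((m (i + 1) : ℝ) : ℂ)‖ := by rw [h0, norm_neg]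
        _ ≤ ∑' i, ‖a (i + 1) * (x : ℂ) ^ ((m (i + 1) : ℝ) : ℂ)‖ := norm_tsum_le_tsum_norm hStail
        _ = ∑' i, ‖a (i + 1)‖ * x ^ (m (i + 1)) := by
            exact tsum_congr fun i => hnorm x hx (i + 1)
    have hterm : ∀ i, ‖a (i + 1)‖ * x ^ (m (i + 1)) ≤ b i * ((x / x0) ^ p * x ^ (m 0)) := by
      intro i
      have he : p ≤ m (i + 1) - m 0 := by
        have := hm.monotone (Nat.one_le_iff_ne_zero.mpr (Nat.succ_ne_zero i))
        simp only [hpdef]; linarith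
      have hxx0 : 0 < x / x0 := div_pos hx hx0
      have hxx1 : x / x0 ≤ 1 := (div_le_one hx0).mpr hxlt.le
      have h1 : x ^ (m (i + 1) - m 0) = (x / x0) ^ (m (i + 1) - m 0) * x0 ^ (m (i + 1) - m 0) := by
        rw [Real.div_rpow hx.le hx0.le]
        field_simp
      have h2 : (x / x0) ^ (m (i + 1) - m 0) ≤ (x / x0) ^ p :=
        Real.rpow_le_rpow_of_exponent_ge hxx0 hxx1 he
      have h3 : x ^ (m (i + 1)) = x ^ (m (i + 1) - m 0) * x ^ (m 0) := by
        rw [← Real.rpow_add hx]; ring_nf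
      rw [h3, h1, hbdef]
      have h4 : (x / x0) ^ (m (i + 1) - m 0) * x0 ^ (m (i + 1) - m 0) * x ^ (m 0)
          ≤ (x / x0) ^ p * x0 ^ (m (i + 1) - m 0) * x ^ (m 0) := by
        have : (0:ℝ) ≤ x0 ^ (m (i + 1) - m 0) * x ^ (m 0) := by positivity
        nlinarith [Real.rpow_pos_of_pos hx (m 0), Real.rpow_pos_of_pos hx0 (m (i+1) - m 0)]
      calc ‖a (i + 1)‖ * ((x / x0) ^ (m (i + 1) - m 0) * x0 ^ (m (i + 1) - m 0) * x ^ (m 0))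
          ≤ ‖a (i + 1)‖ * ((x / x0) ^ p * x0 ^ (m (i + 1) - m 0) * x ^ (m 0)) := by
            exact mul_le_mul_of_nonneg_left h4 (norm_nonneg _)
        _ = ‖a (i + 1)‖ * x0 ^ (m (i + 1) - m 0) * ((x / x0) ^ p * x ^ (m 0)) := by ring
    have hsumL : Summable (fun i => ‖a (i + 1)‖ * x ^ (m (i + 1))) := by
      refine hStail.congr fun i => hnorm x hx (i + 1)
    have hsumR : Summable (fun i => b i * ((x / x0) ^ p * x ^ (m 0))) := hb.mul_right _
    have hbound2 : ∑' i, ‖a (i + 1)‖ * x ^ (m (i + 1))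
        ≤ C * ((x / x0) ^ p * x ^ (m 0)) := by
      calc ∑' i, ‖a (i + 1)‖ * x ^ (m (i + 1))
          ≤ ∑' i, b i * ((x / x0) ^ p * x ^ (m 0)) := Summable.tsum_le_tsum hterm hsumL hsumR
        _ = C * ((x / x0) ^ p * x ^ (m 0)) := by rw [hCdef, tsum_mul_right]
    have hxm0 : 0 < x ^ (m 0) := Real.rpow_pos_of_pos hx _
    have := hbound1.trans hbound2
    calc ‖a 0‖ = ‖a 0‖ * x ^ (m 0) / x ^ (m 0) := by field_simp
      _ ≤ C * ((x / x0) ^ p * x ^ (m 0)) / x ^ (m 0) := (div_le_div_iff_of_pos_right hxm0).mpr this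
      _ = C * (x / x0) ^ p := by field_simp
  have hc : ContinuousAt (fun x : ℝ => C * (x / x0) ^ p) 0 := by
    exact continuousAt_const.mul
      (ContinuousAt.rpow_const ((continuousAt_id (x := (0:ℝ))).div_const x0) (Or.inr hp.le))
  have hval : C * ((0:ℝ) / x0) ^ p = 0 := by
    rw [zero_div, Real.zero_rpow hp.ne', mul_zero]
  have htend : Tendsto (fun x : ℝ => C * (x / x0) ^ p) (𝓝[>] (0:ℝ)) (𝓝 0) := by
    have := hc.tendsto
    rw [hval] at this
    exact this.mono_left nhdsWithin_le_nhds
  have hle : ‖a 0‖ ≤ 0 := by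
    refine ge_of_tendsto htend ?_
    filter_upwards [Ioo_mem_nhdsGT_of_mem ⟨le_refl (0:ℝ), hx0⟩] with x hx
    exact hest x hx.1 hx.2
  exact norm_le_zero_iff.mp hle

theorem expansion_vanishing_14_5 (δ : ℝ) (hδ : 0 < δ)
    (m : ℕ → ℝ) (hm : StrictMono m) (a : ℕ → ℂ)
    (h : ∀ z : ℂ, 0 < ‖z‖ → ‖z‖ < δ →
      Summable (fun i : ℕ => ‖a i * z ^ ((m i : ℝ) : ℂ)‖) ∧
      ∑' i : ℕ, a i * z ^ ((m i : ℝ) : ℂ) = 0) :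
    ∀ i : ℕ, a i = 0 := by
  intro i
  induction i using Nat.strong_induction_on with
  | _ n ih =>
    have key := key_vanish δ hδ (fun j => m (j + n))
      (fun j k hjk => hm (by omega)) (fun j => a (j + n)) ?_
    · simpa using key
    · intro z hz1 hz2
      obtain ⟨hS, hT⟩ := h z hz1 hz2
      constructor
      · exact (summable_nat_add_iff (f := fun i => ‖a i * z ^ ((m i : ℝ) : ℂ)‖) n).mpr hS
      · have hf : Summable (fun i : ℕ => a i * z ^ ((m i : ℝ) : ℂ)) := Summable.of_norm hS
        have hsplit := Summable.sum_add_tsum_nat_add n hf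
        rw [hT] at hsplit
        have hz : ∀ j ∈ Finset.range n, a j * z ^ ((m j : ℝ) : ℂ) = 0 := fun j hj => by
          rw [ih j (Finset.mem_range.mp hj)]; ring
        rw [Finset.sum_eq_zero hz, zero_add] at hsplit
        exact hsplit
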